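/- The feasible solutions of the ILP formulation (constraints 5b–5f,5i) are in cost-preserving bijection with valid extractions: constraints ensure each activated e-class selects exactly one e-node, children of selected e-nodes are activated, roots are activated, and the selection is acyclic; under this correspondence the ILP objective Σ c_i s_i equals the DAG cost of the extraction restricted to activated classes. -/

import Mathlib

/-- A feasible solution of the ILP formulation (constraints 5b–5f, 5i): 0/1 selection
variables `s` for e-nodes and activation variables `A` for e-classes with
`Σ_{i ∈ C_j} s_i = A_j`, `s_i ≤ A_j` for children classes `j` of `i`, `A_r = 1` for
roots, together with some integer level assignment `L` satisfying the big-M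
cycle-elimination constraints with `M = |C| + 1`. -/
structure ILPSol {V C : Type*} [Fintype V] [Fintype C] [DecidableEq C]
    (cl : V → C) (children : V → Finset C) (roots : Finset C) where
  s : V → ℤ
  A : C → ℤ
  hs : ∀ v, s v = 0 ∨ s v = 1
  hA : ∀ c, A c = 0 ∨ A c = 1
  hsum : ∀ c, ∑ v ∈ Finset.univ.filter (fun v => cl v = c), s v = A c
  hchild : ∀ v : V, ∀ c ∈ children v, s v ≤ A c
  hroot : ∀ r ∈ roots, A r = 1
  hlevel : ∃ L : C → ℤ, ∀ v : V, ∀ k ∈ children v, k ≠ cl v →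
    L (cl v) - L k + ((Fintype.card C : ℤ) + 1) * (1 - s v) ≥ 1

/-- A valid extraction: a partial choice `sel` of one e-node per activated e-class
(`sel c = some v`), activating all roots, with each chosen e-node belonging to its class,
children classes of chosen e-nodes activated, and the induced class dependency graph
acyclic (witnessed by a rank function). -/
structure Extraction {V C : Type*} [Fintype V] [Fintype C] [DecidableEq C]
    (cl : V → C) (children : V → Finset C) (roots : Finset C) where
  sel : C → Option V
  hroots : ∀ r ∈ roots, (sel r).isSome
  hcl : ∀ c v, sel c = some v → cl v = c
  hchildren : ∀ c v, sel c = some v → ∀ k ∈ children v, (sel k).isSome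
  hacyc : ∃ r : C → ℕ, ∀ c v, sel c = some v → ∀ k ∈ children v, k ≠ c → r k < r c

open Finset in
lemma rank_aux {C : Type*} [Fintype C] [DecidableEq C] (f : C → ℤ) :
    ∃ r : C → ℕ, (∀ a b, f a < f b → r a < r b) ∧ ∀ c, (r c : ℤ) ≤ (Fintype.card C : ℤ) - 1 := by
  refine ⟨fun c => ((univ.image f).filter (· < f c)).card, fun a b hab => ?_, fun c => ?_⟩
  · apply Finset.card_lt_card
    constructor
    · exact Finset.monotone_filter_right _ (fun x _ hx => lt_trans hx hab)
    · intro hsub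
      have : f a ∈ (univ.image f).filter (· < f a) := hsub (by simp [hab])
      simp at this
  · have h1 : ((univ.image f).filter (· < f c)).card < (univ.image f).card := by
      apply Finset.card_lt_card
      refine ⟨Finset.filter_subset _ _, fun hsub => ?_⟩
      have : f c ∈ (univ.image f).filter (· < f c) := hsub (by simp)
      simp at this
    have h2 : (univ.image f).card ≤ Fintype.card C := by
      simpa using Finset.card_image_le (s := (univ : Finset C)) (f := f)
    simp only []
    omega

open scoped Classical

namespace ILPEXT

variable {V C : Type*} [Fintype V] [Fintype C] [DecidableEq C]
    {cl : V → C} {children : V → Finset C} {roots : Finset C}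

open Finset

/-- the e-nodes selected within class `c` -/
def Pset (x : ILPSol cl children roots) (c : C) : Finset V :=
  univ.filter (fun v => cl v = c ∧ x.s v = 1)

lemma Pset_card (x : ILPSol cl children roots) (c : C) :
    ((Pset x c).card : ℤ) = x.A c := by
  rw [← x.hsum c]
  have : Pset x c = (univ.filter (fun v => cl v = c)).filter (fun v => x.s v = 1) := by
    simp [Pset, Finset.filter_filter]
  rw [this, Finset.card_filter]
  push_cast
  refine Finset.sum_congr rfl (fun v _ => ?_)
  rcases x.hs v with h | h <;> simp [h]

lemma Pset_card_le_one (x : ILPSol cl children roots) (c : C) :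
    (Pset x c).card ≤ 1 := by
  have := Pset_card x c
  rcases x.hA c with h | h <;> omega

noncomputable def selOf (x : ILPSol cl children roots) (c : C) : Option V :=
  if h : (Pset x c).Nonempty then some h.choose else none

lemma selOf_eq_some_iff {x : ILPSol cl children roots} {c : C} {v : V} :
    selOf x c = some v ↔ cl v = c ∧ x.s v = 1 := by
  constructor
  · intro h
    unfold selOf at h
    split_ifs at h with hne
    have hmem := hne.choose_spec
    simp only [Option.some.injEq] at h
    subst h
    simpa [Pset] using hmem
  · intro hv
    have hvmem : v ∈ Pset x c := by simp [Pset, hv.1, hv.2]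
    have hne : (Pset x c).Nonempty := ⟨v, hvmem⟩
    unfold selOf
    rw [dif_pos hne]
    have := Finset.card_le_one.mp (Pset_card_le_one x c) _ hne.choose_spec _ hvmem
    simp [this]

lemma selOf_isSome_iff {x : ILPSol cl children roots} {c : C} :
    (selOf x c).isSome ↔ x.A c = 1 := by
  have hc := Pset_card x c
  constructor
  · intro h
    obtain ⟨v, hv⟩ := Option.isSome_iff_exists.mp h
    have hvmem : v ∈ Pset x c := by
      have := selOf_eq_some_iff.mp hv; simp [Pset, this.1, this.2]
    have : 1 ≤ (Pset x c).card := Finset.card_pos.mpr ⟨v, hvmem⟩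
    rcases x.hA c with h' | h' <;> omega
  · intro h
    rw [h] at hc
    have : (Pset x c).Nonempty := Finset.card_pos.mp (by omega)
    simp [selOf, this]

noncomputable def toExt (x : ILPSol cl children roots) : Extraction cl children roots where
  sel := selOf x
  hroots := fun r hr => selOf_isSome_iff.mpr (x.hroot r hr)
  hcl := fun c v h => (selOf_eq_some_iff.mp h).1
  hchildren := by
    intro c v h k hk
    obtain ⟨-, hs1⟩ := selOf_eq_some_iff.mp h
    have h1 := x.hchild v k hk
    rw [hs1] at h1
    have := x.hA k
    exact selOf_isSome_iff.mpr (by omega)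
  hacyc := by
    obtain ⟨L, hL⟩ := x.hlevel
    obtain ⟨r, hmono, -⟩ := rank_aux L
    refine ⟨r, fun c v h k hk hkc => ?_⟩
    obtain ⟨hclv, hs1⟩ := selOf_eq_some_iff.mp h
    have := hL v k hk (by rw [hclv]; exact hkc)
    rw [hs1, hclv] at this
    apply hmono
    omega

noncomputable def toILP (E : Extraction cl children roots) : ILPSol cl children roots where
  s v := if E.sel (cl v) = some v then 1 else 0
  A c := if (E.sel c).isSome then 1 else 0
  hs v := by split_ifs <;> simp
  hA c := by split_ifs <;> simp
  hsum c := by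
    rcases h : E.sel c with _ | v0
    · have : ∀ v ∈ univ.filter (fun v => cl v = c),
          (if E.sel (cl v) = some v then (1:ℤ) else 0) = 0 := by
        intro v hv
        simp only [mem_filter] at hv
        rw [hv.2, h]
        simp
      rw [Finset.sum_congr rfl this]
      simp [h]
    · have hcl0 : cl v0 = c := E.hcl c v0 h
      have : ∀ v ∈ univ.filter (fun v => cl v = c),
          (if E.sel (cl v) = some v then (1:ℤ) else 0) = (if v = v0 then 1 else 0) := by
        intro v hv
        simp only [mem_filter] at hv
        rw [hv.2, h]
        simp [eq_comm]
      rw [Finset.sum_congr rfl this, Finset.sum_ite_eq' _ v0]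
      simp [hcl0, h]
  hchild v k hk := by
    split_ifs with h1 h2 h3 <;> try norm_num
    exact absurd (E.hchildren _ v h1 k hk) h2
  hroot r hr := by simp [E.hroots r hr]
  hlevel := by
    obtain ⟨r, hr⟩ := E.hacyc
    obtain ⟨r', hmono, hbd⟩ := rank_aux (fun c => (r c : ℤ))
    refine ⟨fun c => (r' c : ℤ), fun v k hk hkc => ?_⟩
    by_cases h : E.sel (cl v) = some v
    · have hlt := hr (cl v) v h k hk hkc
      have := hmono k (cl v) (by exact_mod_cast hlt)
      simp only [h, if_pos]
      push_cast
      omega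
    · have h1 : (0:ℤ) ≤ r' (cl v) := by positivity
      have h2 := hbd k
      simp only [h, if_neg, if_false]
      have hC : (0:ℤ) ≤ (Fintype.card C : ℤ) := by positivity
      omega

lemma ILPSol.my_ext {x y : ILPSol cl children roots} (h1 : x.s = y.s) (h2 : x.A = y.A) :
    x = y := by
  cases x; cases y
  simp_all

lemma Extraction.my_ext {x y : Extraction cl children roots} (h : x.sel = y.sel) :
    x = y := by
  cases x; cases y
  simp_all

end ILPEXT

open ILPEXT Finset

/-- The feasible ILP solutions are in cost-preserving bijection with
valid extractions: under the correspondence, the ILP objective `Σ c_i s_i` equals the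
DAG cost of the extraction (sum of node costs of the e-nodes chosen for the activated
classes). -/
theorem ilp_extraction_bijection {V C : Type*} [Fintype V] [Fintype C] [DecidableEq C]
    (cl : V → C) (children : V → Finset C) (roots : Finset C) (cost : V → ℕ) :
    ∃ e : ILPSol cl children roots ≃ Extraction cl children roots,
      ∀ x : ILPSol cl children roots,
        (∑ v : V, x.s v * (cost v : ℤ)) =
          ∑ c : C, (((e x).sel c).map (fun v => (cost v : ℤ))).getD 0 := by
  classical
  refine ⟨⟨toExt, toILP, ?_, ?_⟩, ?_⟩
  · -- left inverse
    intro x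
    apply ILPSol.my_ext
    · funext v
      show (if selOf x (cl v) = some v then (1:ℤ) else 0) = x.s v
      rcases x.hs v with h | h
      · rw [if_neg, h]
        intro hc
        have := (selOf_eq_some_iff.mp hc).2
        omega
      · rw [if_pos (selOf_eq_some_iff.mpr ⟨rfl, h⟩), h]
    · funext c
      show (if (selOf x c).isSome then (1:ℤ) else 0) = x.A c
      rcases x.hA c with h | h
      · rw [if_neg, h]
        intro hc
        have := selOf_isSome_iff.mp hc
        omega
      · rw [if_pos (selOf_isSome_iff.mpr h), h]
  · -- right inverse
    intro E
    apply Extraction.my_ext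
    funext c
    show selOf (toILP E) c = E.sel c
    rcases h : E.sel c with _ | v0
    · rcases h' : selOf (toILP E) c with _ | v1
      · rfl
      · exfalso
        have := selOf_eq_some_iff.mp h'
        have hs1 := this.2
        show False
        simp only [toILP] at hs1
        split_ifs at hs1 with hsel
        · rw [this.1, h] at hsel
          cases hsel
        · omega
    · have hcl0 : cl v0 = c := E.hcl c v0 h
      apply selOf_eq_some_iff.mpr
      refine ⟨hcl0, ?_⟩
      show (if E.sel (cl v0) = some v0 then (1:ℤ) else 0) = 1
      rw [if_pos (by rw [hcl0]; exact h)]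
  · -- cost
    intro x
    have hfib := Finset.sum_fiberwise_of_maps_to (s := (univ : Finset V))
      (t := (univ : Finset C)) (g := cl)
      (fun v _ => Finset.mem_univ (cl v)) (fun v => x.s v * (cost v : ℤ))
    rw [← hfib]
    refine Finset.sum_congr rfl (fun c _ => ?_)
    show _ = ((selOf x c).map (fun v => (cost v : ℤ))).getD 0
    rcases h : selOf x c with _ | v0
    · have : ∀ v ∈ univ.filter (fun v => cl v = c), x.s v * (cost v : ℤ) = 0 := by
        intro v hv
        simp only [mem_filter] at hv
        rcases x.hs v with h' | h'
        · rw [h']; ring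
        · exfalso
          have : selOf x c = some v := selOf_eq_some_iff.mpr ⟨hv.2, h'⟩
          rw [h] at this
          cases this
      rw [Finset.sum_congr rfl this]
      simp
    · obtain ⟨hcl0, hs0⟩ := selOf_eq_some_iff.mp h
      have : ∀ v ∈ univ.filter (fun v => cl v = c),
          x.s v * (cost v : ℤ) = (if v = v0 then (cost v : ℤ) else 0) := by
        intro v hv
        simp only [mem_filter] at hv
        rcases x.hs v with h' | h'
        · rw [h', if_neg, zero_mul]
          rintro rfl
          omega
        · have : selOf x c = some v := selOf_eq_some_iff.mpr ⟨hv.2, h'⟩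
          rw [h, Option.some.injEq] at this
          rw [if_pos this.symm, h', one_mul]
      rw [Finset.sum_congr rfl this, Finset.sum_ite_eq' _ v0]
      simp [hcl0]
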